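/- Fix a real number α > 0 and define 𝔇 ⊆ [0,1] as in the context. Then 𝔇 has full Lebesgue measure in [0,1]: the Lebesgue measure of [0,1] ∖ 𝔇 equals 0. -/
import Mathlib


open MeasureTheory

/-- `h_ℓ(q) = (ℓq)^(−ℓ q^α − 1)`. -/
noncomputable def hFun (α : ℝ) (ℓ q : ℕ) : ℝ :=
  ((ℓ : ℝ) * (q : ℝ)) ^ (-((ℓ : ℝ) * (q : ℝ) ^ α + 1))

/-- `𝔇_ℓ`: points of `[0,1]` at distance more than `h_ℓ(q)` from every rational `p/q`. -/
def DioSet (α : ℝ) (ℓ : ℕ) : Set ℝ :=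
  {s ∈ Set.Icc (0 : ℝ) 1 | ∀ p q : ℕ, 1 ≤ q → hFun α ℓ q < |s - (p : ℝ) / (q : ℝ)|}

/-- Any irrational point of `[0,1]` outside every `𝔇_ℓ` is a Liouville number. -/
lemma liouville_of_not_dioSet (α : ℝ) (hα : 0 < α) (s : ℝ) (hs : s ∈ Set.Icc (0 : ℝ) 1)
    (hbad : ∀ ℓ : ℕ, 1 ≤ ℓ → s ∉ DioSet α ℓ) (hirr : Irrational s) : Liouville s := by
  -- s is strictly inside (0,1)
  have hs0 : 0 < s := lt_of_le_of_ne hs.1 (by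
    intro h; exact hirr ⟨0, by simpa using h⟩)
  have hs1 : s < 1 := lt_of_le_of_ne hs.2 (by
    intro h; exact hirr ⟨1, by simpa using h.symm⟩)
  set d : ℝ := min s (1 - s) with hd
  have hd0 : 0 < d := lt_min hs0 (by linarith)
  intro n
  obtain ⟨N, hN⟩ := exists_nat_gt (1 / d)
  set ℓ : ℕ := max (n + 1) N with hℓdef
  have hℓ1 : 1 ≤ ℓ := le_trans (Nat.le_add_left 1 n) (le_max_left _ _)
  have hℓn : n + 1 ≤ ℓ := le_max_left _ _
  have hℓN : N ≤ ℓ := le_max_right _ _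
  have hℓpos : (0 : ℝ) < ℓ := by exact_mod_cast hℓ1
  have hℓR : (1 : ℝ) ≤ ℓ := by exact_mod_cast hℓ1
  -- get the witness p, q
  have h1 := hbad ℓ hℓ1
  simp only [DioSet, Set.mem_setOf_eq, Set.mem_sep_iff] at h1
  push_neg at h1
  obtain ⟨p, q, hq1, hle⟩ := h1 hs
  have hq0 : (0 : ℝ) < q := by exact_mod_cast hq1
  have hqR : (1 : ℝ) ≤ q := by exact_mod_cast hq1
  -- 1/ℓ < d
  have hinv : 1 / (ℓ : ℝ) < d := by
    rw [div_lt_iff₀ hℓpos]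
    have h2 : 1 / d < (ℓ : ℝ) := lt_of_lt_of_le hN (by exact_mod_cast hℓN)
    rw [div_lt_iff₀ hd0] at h2
    linarith
  -- first: q ≥ 2
  have hq2 : 2 ≤ q := by
    by_contra h
    have hq : q = 1 := by omega
    subst hq
    -- hFun α ℓ 1 ≤ 1/ℓ
    have he : hFun α ℓ 1 ≤ 1 / (ℓ : ℝ) := by
      have : hFun α ℓ 1 = (ℓ : ℝ) ^ (-((ℓ : ℝ) + 1)) := by
        simp [hFun, Real.one_rpow]
      rw [this]
      have h3 : (ℓ : ℝ) ^ (-((ℓ : ℝ) + 1)) ≤ (ℓ : ℝ) ^ (-(1 : ℝ)) := by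
        apply Real.rpow_le_rpow_of_exponent_le hℓR
        linarith
      simpa [Real.rpow_neg_one, one_div] using h3
    have hle' : |s - (p : ℝ)| ≤ hFun α ℓ 1 := by simpa using hle
    -- but |s - p| ≥ d for every natural p
    have hge : d ≤ |s - (p : ℝ)| := by
      rcases Nat.eq_zero_or_pos p with hp | hp
      · subst hp
        simp only [Nat.cast_zero, sub_zero]
        rw [abs_of_pos hs0]
        exact min_le_left _ _
      · have hp1 : (1 : ℝ) ≤ p := by exact_mod_cast hp
        rw [abs_of_nonpos (by linarith), neg_sub]
        calc d ≤ 1 - s := min_le_right _ _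
          _ ≤ (p : ℝ) - s := by linarith
    have : d ≤ 1 / (ℓ : ℝ) := hge.trans (hle'.trans he)
    linarith
  have hq2R : (2 : ℝ) ≤ q := by exact_mod_cast hq2
  -- hFun α ℓ q ≤ q ^ (-(ℓ+1))  (real exponent)
  have hkey : hFun α ℓ q ≤ (q : ℝ) ^ (-((ℓ : ℝ) + 1)) := by
    have hqα : (1 : ℝ) ≤ (q : ℝ) ^ α := Real.one_le_rpow hqR hα.le
    have he1 : (ℓ : ℝ) + 1 ≤ (ℓ : ℝ) * (q : ℝ) ^ α + 1 := by nlinarith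
    have hepos : (0 : ℝ) ≤ (ℓ : ℝ) * (q : ℝ) ^ α + 1 := by nlinarith
    have hbase : (q : ℝ) ≤ (ℓ : ℝ) * (q : ℝ) := by nlinarith
    calc hFun α ℓ q = (((ℓ : ℝ) * (q : ℝ)) ^ ((ℓ : ℝ) * (q : ℝ) ^ α + 1))⁻¹ := by
          rw [hFun, Real.rpow_neg (by positivity)]
      _ ≤ ((q : ℝ) ^ ((ℓ : ℝ) * (q : ℝ) ^ α + 1))⁻¹ := by
          apply inv_anti₀ (by positivity)
          exact Real.rpow_le_rpow (by positivity) hbase hepos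
      _ = (q : ℝ) ^ (-((ℓ : ℝ) * (q : ℝ) ^ α + 1)) := by
          rw [Real.rpow_neg (by positivity)]
      _ ≤ (q : ℝ) ^ (-((ℓ : ℝ) + 1)) := by
          apply Real.rpow_le_rpow_of_exponent_le hqR
          linarith
  -- provide the Liouville witness
  refine ⟨(p : ℤ), (q : ℤ), by exact_mod_cast hq2, ?_, ?_⟩
  · intro h
    exact hirr ⟨(p : ℚ) / (q : ℚ), by push_cast; exact h.symm⟩
  · have h4 : (q : ℝ) ^ (-((ℓ : ℝ) + 1)) = 1 / (q : ℝ) ^ (ℓ + 1 : ℕ) := by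
      rw [Real.rpow_neg (by positivity), one_div, ← Real.rpow_natCast (q : ℝ) (ℓ + 1)]
      push_cast
      ring_nf
    have h5 : (1 : ℝ) / (q : ℝ) ^ (ℓ + 1 : ℕ) < 1 / (q : ℝ) ^ n := by
      apply one_div_lt_one_div_of_lt (by positivity)
      exact pow_lt_pow_right₀ (by linarith) (by omega)
    calc |s - (p : ℤ) / (q : ℤ)| = |s - (p : ℝ) / (q : ℝ)| := by push_cast; ring_nf
      _ ≤ hFun α ℓ q := hle
      _ ≤ (q : ℝ) ^ (-((ℓ : ℝ) + 1)) := hkey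
      _ < 1 / ((q : ℤ) : ℝ) ^ n := by rw [h4]; push_cast; exact h5

/-- For `α > 0` the set `𝔇 = ⋃_{ℓ ≥ 1} 𝔇_ℓ` has full Lebesgue measure in
`[0,1]`: the Lebesgue measure of `[0,1] ∖ 𝔇` is `0`. -/
theorem dioSet_full_measure (α : ℝ) (hα : 0 < α) :
    volume (Set.Icc (0 : ℝ) 1 \ ⋃ ℓ : ℕ, ⋃ _ : 1 ≤ ℓ, DioSet α ℓ) = 0 := by
  refine measure_mono_null (t := {x : ℝ | Liouville x} ∪ Set.range ((↑) : ℚ → ℝ)) ?_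
    (measure_union_null volume_setOf_liouville ((Set.countable_range _).measure_zero _))
  · rintro s ⟨hs, hns⟩
    simp only [Set.mem_iUnion, not_exists] at hns
    by_cases hirr : Irrational s
    · exact Or.inl (liouville_of_not_dioSet α hα s hs hns hirr)
    · right
      rw [Irrational] at hirr
      simpa using hirr
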